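/- (Uniqueness of b_Λ) Suppose A ∈ B^{i,ℓ} satisfies ε_l(A) = a_l for all l = 0,…,n, where (a₀,…,a_n) are non-negative integers with Σ_j a_j = ℓ. Then A = b_Λ, i.e., A_{p,q} = a_{p+q-i} for all 1 ≤ p ≤ i, i ≤ q ≤ n. -/

import Mathlib

open Finset

/-- Matrices of the polytope model: entry `a p q` for row `p`, column `q`. -/
abbrev Mat := ℕ → ℕ → ℕ

/-- A monotone lattice path `β(1) = (1,i), …, β(n) = (i,n)`: each step increases
the row or the column index by 1. -/
def IsPath (n i : ℕ) (β : ℕ → ℕ × ℕ) : Prop :=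
  β 1 = (1, i) ∧ β n = (i, n) ∧
    ∀ s, 1 ≤ s → s < n →
      β (s + 1) = ((β s).1 + 1, (β s).2) ∨ β (s + 1) = ((β s).1, (β s).2 + 1)

/-- Membership in the Kirillov–Reshetikhin polytope `B^{i,m}` of type `A_n^{(1)}`:
non-negative integer matrices indexed by `1 ≤ p ≤ i`, `i ≤ q ≤ n` (zero outside),
all of whose monotone lattice-path sums are at most `m`. -/
def MemKR (n i m : ℕ) (a : Mat) : Prop :=
  (∀ p q, ¬(1 ≤ p ∧ p ≤ i ∧ i ≤ q ∧ q ≤ n) → a p q = 0) ∧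
  ∀ β : ℕ → ℕ × ℕ, IsPath n i β → ∑ s ∈ Icc 1 n, a (β s).1 (β s).2 ≤ m

/-- The set of maximizers of `F` on `S`. -/
def maximizers (S : Finset ℕ) (F : ℕ → ℕ) : Finset ℕ :=
  S.filter fun q => ∀ q' ∈ S, F q' ≤ F q

/-- Smallest maximizer. -/
def argmaxLow (S : Finset ℕ) (F : ℕ → ℕ) : ℕ := WithTop.untopD 0 (maximizers S F).min

/-- Largest maximizer. -/
def argmaxHigh (S : Finset ℕ) (F : ℕ → ℕ) : ℕ := WithBot.unbotD 0 (maximizers S F).max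

/-- For `l > i`: `G(q) = Σ_{j=1}^q a_{j,l-1} + Σ_{j=q}^i a_{j,l}`. -/
def Gplus (i : ℕ) (a : Mat) (l q : ℕ) : ℕ :=
  ∑ j ∈ Icc 1 q, a j (l - 1) + ∑ j ∈ Icc q i, a j l

/-- For `l < i`: `F(q) = Σ_{j=i}^q a_{l,j} + Σ_{j=q}^n a_{l+1,j}`. -/
def Fminus (n i : ℕ) (a : Mat) (l q : ℕ) : ℕ :=
  ∑ j ∈ Icc i q, a l j + ∑ j ∈ Icc q n, a (l + 1) j

def pPlus (i : ℕ) (a : Mat) (l : ℕ) : ℕ := argmaxLow (Icc 1 i) (Gplus i a l)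
def qPlus (i : ℕ) (a : Mat) (l : ℕ) : ℕ := argmaxHigh (Icc 1 i) (Gplus i a l)
def pMinus (n i : ℕ) (a : Mat) (l : ℕ) : ℕ := argmaxHigh (Icc i n) (Fminus n i a l)
def qMinus (n i : ℕ) (a : Mat) (l : ℕ) : ℕ := argmaxLow (Icc i n) (Fminus n i a l)

/-- The statistic `φ_l` of the polytope model (`l = 0` is the affine one). -/
def phi (n i m : ℕ) (a : Mat) (l : ℕ) : ℤ :=
  if l = 0 then (a 1 n : ℤ)
  else if l = i then
    (m : ℤ) - ∑ j ∈ Icc 1 (i - 1), (a j i : ℤ) - ∑ j ∈ Icc i n, (a i j : ℤ)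
  else if i < l then
    ∑ j ∈ Icc 1 (pPlus i a l), (a j (l - 1) : ℤ)
      - ∑ j ∈ Icc 1 (pPlus i a l - 1), (a j l : ℤ)
  else
    ∑ j ∈ Icc (pMinus n i a l) n, (a (l + 1) j : ℤ)
      - ∑ j ∈ Icc (pMinus n i a l + 1) n, (a l j : ℤ)

/-- The statistic `ε_l` of the polytope model (`l = 0` is the affine one). -/
def eps (n i m : ℕ) (a : Mat) (l : ℕ) : ℤ :=
  if l = 0 then
    (m : ℤ) - ∑ j ∈ Icc i n, (a 1 j : ℤ) - ∑ j ∈ Icc 2 n, (a j n : ℤ)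
  else if l = i then (a i i : ℤ)
  else if i < l then
    ∑ j ∈ Icc (qPlus i a l) i, (a j l : ℤ)
      - ∑ j ∈ Icc (qPlus i a l + 1) i, (a j (l - 1) : ℤ)
  else
    ∑ j ∈ Icc i (qMinus n i a l), (a l j : ℤ)
      - ∑ j ∈ Icc i (qMinus n i a l - 1), (a (l + 1) j : ℤ)

/-- Update one entry of a matrix. -/
def upd (a : Mat) (p q v : ℕ) : Mat :=
  fun p' q' => if p' = p ∧ q' = q then v else a p' q'

/-- The Kashiwara raising operator `ẽ_l` on `B^{i,m}` (`l = 0` affine). -/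
def eOp (n i m : ℕ) (a : Mat) (l : ℕ) : Option Mat :=
  if eps n i m a l ≤ 0 then none
  else some (
    if l = 0 then upd a 1 n (a 1 n + 1)
    else if l = i then upd a i i (a i i - 1)
    else if i < l then
      upd (upd a (qPlus i a l) (l - 1) (a (qPlus i a l) (l - 1) + 1))
        (qPlus i a l) l (a (qPlus i a l) l - 1)
    else
      upd (upd a l (qMinus n i a l) (a l (qMinus n i a l) - 1))
        (l + 1) (qMinus n i a l) (a (l + 1) (qMinus n i a l) + 1))

/-- The Kashiwara lowering operator `f̃_l` on `B^{i,m}` (`l = 0` affine). -/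
def fOp (n i m : ℕ) (a : Mat) (l : ℕ) : Option Mat :=
  if phi n i m a l ≤ 0 then none
  else some (
    if l = 0 then upd a 1 n (a 1 n - 1)
    else if l = i then upd a i i (a i i + 1)
    else if i < l then
      upd (upd a (pPlus i a l) (l - 1) (a (pPlus i a l) (l - 1) - 1))
        (pPlus i a l) l (a (pPlus i a l) l + 1)
    else
      upd (upd a l (pMinus n i a l) (a l (pMinus n i a l) + 1))
        (l + 1) (pMinus n i a l) (a (l + 1) (pMinus n i a l) - 1))

/-- `ẽ_l` on the tensor product `B^{r₁,s₁} ⊗ B^{r₂,s₂}`. -/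
def eTen (n r₁ s₁ r₂ s₂ l : ℕ) (x : Mat × Mat) : Option (Mat × Mat) :=
  if phi n r₂ s₂ x.2 l < eps n r₁ s₁ x.1 l then
    (eOp n r₁ s₁ x.1 l).map fun a' => (a', x.2)
  else (eOp n r₂ s₂ x.2 l).map fun b' => (x.1, b')

/-- `f̃_l` on the tensor product `B^{r₁,s₁} ⊗ B^{r₂,s₂}`. -/
def fTen (n r₁ s₁ r₂ s₂ l : ℕ) (x : Mat × Mat) : Option (Mat × Mat) :=
  if phi n r₂ s₂ x.2 l ≤ eps n r₁ s₁ x.1 l then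
    (fOp n r₁ s₁ x.1 l).map fun a' => (a', x.2)
  else (fOp n r₂ s₂ x.2 l).map fun b' => (x.1, b')

/-- Classical highest weight element of the tensor product. -/
def IsHW (n r₁ s₁ r₂ s₂ : ℕ) (x : Mat × Mat) : Prop :=
  ∀ l, 1 ≤ l → l ≤ n → eTen n r₁ s₁ r₂ s₂ l x = none

/-- Cartan matrix of type `A_n`: `⟨α_r, α_j^∨⟩`. -/
def cartan (r j : ℕ) : ℤ :=
  if r = j then 2 else if r + 1 = j ∨ j + 1 = r then -1 else 0

/-- The pairing `⟨wt(A), α_j^∨⟩` where `wt(A) = m ω_i - Σ a_{p,q} α_{p,q}`,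
and `α_{p,q} = α_p + ⋯ + α_q`. -/
def wtCoord (n i m : ℕ) (a : Mat) (j : ℕ) : ℤ :=
  (if j = i then (m : ℤ) else 0)
    - ∑ p ∈ Icc 1 i, ∑ q ∈ Icc i n, (a p q : ℤ) * ∑ r ∈ Icc p q, cartan r j

/-- The matrix `b^Λ` with `(p,q)`-entry `c ((p+q) mod (n+1))` on the index range. -/
def bOf (n i : ℕ) (c : ℕ → ℕ) : Mat :=
  fun p q => if 1 ≤ p ∧ p ≤ i ∧ i ≤ q ∧ q ≤ n then c ((p + q) % (n + 1)) else 0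


section Helpers
open Finset

lemma sum_Icc_split (f : ℕ → ℤ) (a b cc : ℕ)
    (hab : a ≤ b + 1) (hbc : b ≤ cc) :
    ∑ j ∈ Icc a cc, f j = ∑ j ∈ Icc a b, f j + ∑ j ∈ Icc (b + 1) cc, f j := by
  rw [← Finset.sum_union (by
    simp only [Finset.disjoint_left, Finset.mem_Icc]
    omega)]
  apply Finset.sum_congr _ (fun _ _ => rfl)
  ext x
  simp only [Finset.mem_union, Finset.mem_Icc]
  omega

lemma telescope (f : ℕ → ℤ) (m : ℕ) :
    ∑ l ∈ Icc 1 m, (f l - f (l + 1)) = f 1 - f (m + 1) := by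
  induction m with
  | zero => simp
  | succ k ih => rw [Finset.sum_Icc_succ_top (by omega), ih]; ring

lemma sum_Icc_shift (f : ℕ → ℤ) (a b : ℕ) :
    ∑ j ∈ Icc (a + 1) (b + 1), f j = ∑ j ∈ Icc a b, f (j + 1) := by
  rw [← Finset.map_add_right_Icc a b 1, Finset.sum_map]
  rfl

lemma maximizers_nonempty {S : Finset ℕ} (hS : S.Nonempty) (F : ℕ → ℕ) :
    (maximizers S F).Nonempty := by
  obtain ⟨b, hb, hmax⟩ := S.exists_max_image F hS
  exact ⟨b, Finset.mem_filter.2 ⟨hb, hmax⟩⟩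

lemma argmaxHigh_spec {S : Finset ℕ} (hS : S.Nonempty) (F : ℕ → ℕ) :
    argmaxHigh S F ∈ S ∧ ∀ q ∈ S, F q ≤ F (argmaxHigh S F) := by
  have h := maximizers_nonempty hS F
  have hmem : argmaxHigh S F ∈ maximizers S F := by
    rw [argmaxHigh, ← Finset.coe_max' h]
    simpa using Finset.max'_mem _ h
  have h2 := Finset.mem_filter.1 hmem
  exact ⟨h2.1, h2.2⟩

lemma argmaxLow_spec {S : Finset ℕ} (hS : S.Nonempty) (F : ℕ → ℕ) :
    argmaxLow S F ∈ S ∧ ∀ q ∈ S, F q ≤ F (argmaxLow S F) := by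
  have h := maximizers_nonempty hS F
  have hmem : argmaxLow S F ∈ maximizers S F := by
    rw [argmaxLow, ← Finset.coe_min' h]
    exact Finset.min'_mem _ h
  have h2 := Finset.mem_filter.1 hmem
  exact ⟨h2.1, h2.2⟩

end Helpers


section Helpers2
open Finset

lemma sum_shift' (g : ℕ → ℤ) {a b : ℕ} (hb : 1 ≤ b) :
    ∑ j ∈ Icc (a + 1) b, g j = ∑ j ∈ Icc a (b - 1), g (j + 1) := by
  obtain ⟨b', rfl⟩ : ∃ b', b = b' + 1 := ⟨b - 1, by omega⟩
  rw [sum_Icc_shift]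
  norm_num

/-- Lower bound function for `eps`. -/
def lbAux (n i ℓ : ℕ) (A : Mat) (l : ℕ) : ℤ :=
  if l = 0 then (ℓ : ℤ) - (∑ j ∈ Icc i n, (A 1 j : ℤ)) - ∑ j ∈ Icc 2 n, (A j n : ℤ)
  else if l = i then (A i i : ℤ)
  else if i < l then (A i l : ℤ)
  else (∑ j ∈ Icc i n, (A l j : ℤ)) - (∑ j ∈ Icc i n, (A (l + 1) j : ℤ)) + (A (l + 1) n : ℤ)

end Helpers2

/-- uniqueness of `b_Λ`: if `A ∈ B^{i,ℓ}` has `ε_l(A) = a_l` for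
all `l = 0,…,n` where `Σ a_j = ℓ`, then `A_{p,q} = a_{p+q-i}` on the whole index
range. -/
theorem stmt17 (n i ℓ : ℕ) (hi1 : 1 ≤ i) (hin : i ≤ n) (c : ℕ → ℕ)
    (hsum : ∑ j ∈ range (n + 1), c j = ℓ) (A : Mat) (hA : MemKR n i ℓ A)
    (heps : ∀ l, l ≤ n → eps n i ℓ A l = c l) :
    ∀ p q, 1 ≤ p → p ≤ i → i ≤ q → q ≤ n → A p q = c (p + q - i) := by
  obtain ⟨hz, -⟩ := hA
  have hIccA : (Icc 1 i).Nonempty := Finset.nonempty_Icc.2 hi1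
  have hIccB : (Icc i n).Nonempty := Finset.nonempty_Icc.2 hin
  have hGcast : ∀ l r : ℕ, (Gplus i A l r : ℤ)
      = ∑ j ∈ Icc 1 r, (A j (l - 1) : ℤ) + ∑ j ∈ Icc r i, (A j l : ℤ) := by
    intro l r; simp [Gplus]
  have hFcast : ∀ l r : ℕ, (Fminus n i A l r : ℤ)
      = ∑ j ∈ Icc i r, (A l j : ℤ) + ∑ j ∈ Icc r n, (A (l + 1) j : ℤ) := by
    intro l r; simp [Fminus]
  have hGkey : ∀ l r, 1 ≤ r → r ≤ i →
      ∑ j ∈ Icc r i, (A j l : ℤ) - ∑ j ∈ Icc (r + 1) i, (A j (l - 1) : ℤ)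
        = (Gplus i A l r : ℤ) - ∑ j ∈ Icc 1 i, (A j (l - 1) : ℤ) := by
    intro l r h1 h2
    rw [hGcast, sum_Icc_split (fun j => (A j (l - 1) : ℤ)) 1 r i (by omega) h2]
    ring
  have hFkey : ∀ l r, i ≤ r → r ≤ n →
      ∑ j ∈ Icc i r, (A l j : ℤ) - ∑ j ∈ Icc i (r - 1), (A (l + 1) j : ℤ)
        = (Fminus n i A l r : ℤ) - ∑ j ∈ Icc i n, (A (l + 1) j : ℤ) := by
    intro l r h1 h2
    obtain ⟨r', rfl⟩ : ∃ r', r = r' + 1 := ⟨r - 1, by omega⟩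
    rw [hFcast, sum_Icc_split (fun j => (A (l + 1) j : ℤ)) i r' n (by omega) (by omega)]
    simp only [Nat.add_sub_cancel]
    ring
  have hqP : ∀ l, qPlus i A l ∈ Icc 1 i ∧
      ∀ r ∈ Icc 1 i, Gplus i A l r ≤ Gplus i A l (qPlus i A l) := by
    intro l; exact argmaxHigh_spec hIccA (Gplus i A l)
  have hqM : ∀ l, qMinus n i A l ∈ Icc i n ∧
      ∀ r ∈ Icc i n, Fminus n i A l r ≤ Fminus n i A l (qMinus n i A l) := by
    intro l; exact argmaxLow_spec hIccB (Fminus n i A l)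
  have hepsHi : ∀ l, i < l →
      eps n i ℓ A l = (Gplus i A l (qPlus i A l) : ℤ) - ∑ j ∈ Icc 1 i, (A j (l - 1) : ℤ) := by
    intro l h1
    have hq := (hqP l).1
    simp only [Finset.mem_Icc] at hq
    rw [eps, if_neg (by omega), if_neg (by omega), if_pos h1]
    exact hGkey l _ hq.1 hq.2
  have hepsLo : ∀ l, 1 ≤ l → l < i →
      eps n i ℓ A l = (Fminus n i A l (qMinus n i A l) : ℤ) - ∑ j ∈ Icc i n, (A (l + 1) j : ℤ) := by
    intro l h1 h2
    have hq := (hqM l).1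
    simp only [Finset.mem_Icc] at hq
    rw [eps, if_neg (by omega), if_neg (by omega), if_neg (by omega)]
    exact hFkey l _ hq.1 hq.2
  have hGi : ∀ l, (Gplus i A l i : ℤ) - ∑ j ∈ Icc 1 i, (A j (l - 1) : ℤ) = (A i l : ℤ) := by
    intro l
    rw [hGcast, Finset.Icc_self, Finset.sum_singleton]
    ring
  have hFn : ∀ l, (Fminus n i A l n : ℤ) - ∑ j ∈ Icc i n, (A (l + 1) j : ℤ)
      = (∑ j ∈ Icc i n, (A l j : ℤ)) - (∑ j ∈ Icc i n, (A (l + 1) j : ℤ)) + (A (l + 1) n : ℤ) := by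
    intro l
    rw [hFcast, Finset.Icc_self, Finset.sum_singleton]
    ring
  have hlb_le : ∀ l ∈ range (n + 1), lbAux n i ℓ A l ≤ eps n i ℓ A l := by
    intro l hl
    rw [Finset.mem_range] at hl
    rcases eq_or_ne l 0 with rfl | hl0
    · rw [eps, if_pos rfl]
      simp [lbAux]
    rcases eq_or_ne l i with rfl | hli
    · rw [eps, if_neg hl0, if_pos rfl]
      simp [lbAux, hl0]
    rcases Nat.lt_or_ge i l with hgt | hlt
    · have hval : lbAux n i ℓ A l = (A i l : ℤ) := by
        simp only [lbAux]; rw [if_neg hl0, if_neg hli, if_pos hgt]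
      rw [hval, hepsHi l hgt, ← hGi l]
      have := (hqP l).2 i (by simp [Finset.mem_Icc]; omega)
      have : (Gplus i A l i : ℤ) ≤ (Gplus i A l (qPlus i A l) : ℤ) := by exact_mod_cast this
      linarith
    · have hl1 : 1 ≤ l := by omega
      have hlt' : l < i := by omega
      have hval : lbAux n i ℓ A l
          = (∑ j ∈ Icc i n, (A l j : ℤ)) - (∑ j ∈ Icc i n, (A (l + 1) j : ℤ)) + (A (l + 1) n : ℤ) := by
        simp only [lbAux]; rw [if_neg hl0, if_neg hli, if_neg (by omega)]
      rw [hval, hepsLo l hl1 hlt', ← hFn l]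
      have := (hqM l).2 n (by simp [Finset.mem_Icc]; omega)
      have : (Fminus n i A l n : ℤ) ≤ (Fminus n i A l (qMinus n i A l) : ℤ) := by exact_mod_cast this
      linarith
  have hAn0 : ∀ j, i < j → A j n = 0 := fun j hj => hz j n (by omega)
  have hrange : range (n + 1) = Icc 0 n := by ext x; simp
  have hlb_sum : ∑ l ∈ range (n + 1), lbAux n i ℓ A l = (ℓ : ℤ) := by
    have e0 : lbAux n i ℓ A 0
        = (ℓ : ℤ) - (∑ j ∈ Icc i n, (A 1 j : ℤ)) - ∑ j ∈ Icc 2 n, (A j n : ℤ) := by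
      simp [lbAux]
    have ei : lbAux n i ℓ A i = (A i i : ℤ) := by
      simp only [lbAux]; rw [if_neg (by omega : ¬ i = 0)]; simp
    have hsplit : ∑ l ∈ range (n + 1), lbAux n i ℓ A l
        = lbAux n i ℓ A 0 + ∑ l ∈ Icc 1 (i - 1), lbAux n i ℓ A l
          + lbAux n i ℓ A i + ∑ l ∈ Icc (i + 1) n, lbAux n i ℓ A l := by
      rw [hrange, sum_Icc_split (lbAux n i ℓ A) 0 0 n (by omega) (by omega),
        sum_Icc_split (lbAux n i ℓ A) 1 i n (by omega) hin,
        sum_Icc_split (lbAux n i ℓ A) 1 (i - 1) i (by omega) (by omega),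
        show i - 1 + 1 = i by omega, Finset.Icc_self, Finset.Icc_self,
        Finset.sum_singleton, Finset.sum_singleton]
      ring
    have emid : ∑ l ∈ Icc 1 (i - 1), lbAux n i ℓ A l
        = (∑ j ∈ Icc i n, (A 1 j : ℤ)) - (∑ j ∈ Icc i n, (A i j : ℤ))
          + ∑ j ∈ Icc 2 i, (A j n : ℤ) := by
      have e1 : ∀ l ∈ Icc 1 (i - 1), lbAux n i ℓ A l
          = ((∑ j ∈ Icc i n, (A l j : ℤ)) - (∑ j ∈ Icc i n, (A (l + 1) j : ℤ)))
            + (A (l + 1) n : ℤ) := by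
        intro l hl
        simp only [Finset.mem_Icc] at hl
        simp only [lbAux]
        rw [if_neg (by omega), if_neg (by omega), if_neg (by omega)]
      rw [Finset.sum_congr rfl e1, Finset.sum_add_distrib,
        telescope (fun l => ∑ j ∈ Icc i n, (A l j : ℤ)) (i - 1),
        show i - 1 + 1 = i by omega]
      congr 1
      rw [← sum_Icc_shift (fun j => (A j n : ℤ)) 1 (i - 1),
        show i - 1 + 1 = i by omega, show (1 : ℕ) + 1 = 2 from rfl]
    have eright : ∑ l ∈ Icc (i + 1) n, lbAux n i ℓ A l = ∑ l ∈ Icc (i + 1) n, (A i l : ℤ) := by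
      apply Finset.sum_congr rfl
      intro l hl
      simp only [Finset.mem_Icc] at hl
      simp only [lbAux]
      rw [if_neg (by omega), if_neg (by omega), if_pos (by omega)]
    have etail : ∑ j ∈ Icc 2 n, (A j n : ℤ) = ∑ j ∈ Icc 2 i, (A j n : ℤ) := by
      rw [sum_Icc_split (fun j => (A j n : ℤ)) 2 i n (by omega) hin]
      have hz2 : ∑ j ∈ Icc (i + 1) n, (A j n : ℤ) = 0 := Finset.sum_eq_zero (fun j hj => by
        simp only [Finset.mem_Icc] at hj
        rw [hAn0 j (by omega)]
        norm_num)
      rw [hz2]; ring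
    have efi : ∑ j ∈ Icc i n, (A i j : ℤ) = (A i i : ℤ) + ∑ j ∈ Icc (i + 1) n, (A i j : ℤ) := by
      rw [sum_Icc_split (fun j => (A i j : ℤ)) i i n (by omega) hin, Finset.Icc_self,
        Finset.sum_singleton]
    rw [hsplit, e0, ei, emid, eright, etail, efi]
    ring
  have heps_sum : ∑ l ∈ range (n + 1), eps n i ℓ A l = (ℓ : ℤ) := by
    have h1 : ∑ l ∈ range (n + 1), eps n i ℓ A l = ∑ l ∈ range (n + 1), (c l : ℤ) := by
      apply Finset.sum_congr rfl
      intro l hl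
      rw [Finset.mem_range] at hl
      exact heps l (by omega)
    rw [h1, ← hsum, Nat.cast_sum]
  have heq : ∀ l ∈ range (n + 1), eps n i ℓ A l = lbAux n i ℓ A l := by
    have hzero : ∑ l ∈ range (n + 1), (eps n i ℓ A l - lbAux n i ℓ A l) = 0 := by
      rw [Finset.sum_sub_distrib, heps_sum, hlb_sum]; ring
    intro l hl
    have h2 := (Finset.sum_eq_zero_iff_of_nonneg
      (fun x hx => sub_nonneg.2 (hlb_le x hx))).1 hzero l hl
    linarith
  have h1 : ∀ l, i ≤ l → l ≤ n → (A i l : ℤ) = (c l : ℤ) := by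
    intro l hl1 hl2
    rcases eq_or_lt_of_le hl1 with he | hlt
    · subst he
      have h := heps i hin
      rw [eps, if_neg (by omega : ¬ i = 0)] at h
      simpa using h
    · have e1 := heq l (by rw [Finset.mem_range]; omega)
      have e2 := heps l hl2
      have e3 : lbAux n i ℓ A l = (A i l : ℤ) := by
        simp only [lbAux]
        rw [if_neg (by omega), if_neg (by omega), if_pos hlt]
      rw [e3, e2] at e1
      exact e1.symm
  have h2 : ∀ l r, i < l → l ≤ n → 1 ≤ r → r ≤ i →
      (Gplus i A l r : ℤ) ≤ (Gplus i A l i : ℤ) := by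
    intro l r hl1 hl2 hr1 hr2
    have e1 := heq l (by rw [Finset.mem_range]; omega)
    rw [hepsHi l hl1] at e1
    have e3 : lbAux n i ℓ A l = (Gplus i A l i : ℤ) - ∑ j ∈ Icc 1 i, (A j (l - 1) : ℤ) := by
      simp only [lbAux]
      rw [if_neg (by omega), if_neg (by omega), if_pos hl1, ← hGi l]
    rw [e3] at e1
    have e4 : (Gplus i A l r : ℤ) ≤ (Gplus i A l (qPlus i A l) : ℤ) := by
      exact_mod_cast (hqP l).2 r (by simp only [Finset.mem_Icc]; omega)
    linarith
  have h3 : ∀ l, 1 ≤ l → l < i →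
      (∑ j ∈ Icc i n, (A l j : ℤ)) - (∑ j ∈ Icc i n, (A (l + 1) j : ℤ)) + (A (l + 1) n : ℤ)
        = (c l : ℤ) := by
    intro l ha hb
    have e1 := heq l (by rw [Finset.mem_range]; omega)
    have e2 := heps l (by omega)
    have e3 : lbAux n i ℓ A l
        = (∑ j ∈ Icc i n, (A l j : ℤ)) - (∑ j ∈ Icc i n, (A (l + 1) j : ℤ))
          + (A (l + 1) n : ℤ) := by
      simp only [lbAux]
      rw [if_neg (by omega), if_neg (by omega), if_neg (by omega)]
    rw [e3, e2] at e1
    exact e1.symm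
  have h4 : ∀ l r, 1 ≤ l → l < i → i ≤ r → r ≤ n →
      (Fminus n i A l r : ℤ) ≤ (Fminus n i A l n : ℤ) := by
    intro l r ha hb hr1 hr2
    have e1 := heq l (by rw [Finset.mem_range]; omega)
    rw [hepsLo l ha hb] at e1
    have e3 : lbAux n i ℓ A l
        = (Fminus n i A l n : ℤ) - ∑ j ∈ Icc i n, (A (l + 1) j : ℤ) := by
      simp only [lbAux]
      rw [if_neg (by omega), if_neg (by omega), if_neg (by omega)]
      rw [hFn l]
    rw [e3] at e1
    have e4 : (Fminus n i A l r : ℤ) ≤ (Fminus n i A l (qMinus n i A l) : ℤ) := by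
      exact_mod_cast (hqM l).2 r (by simp only [Finset.mem_Icc]; omega)
    linarith
  have main : ∀ k p, 1 ≤ p → p ≤ i → i ≤ p + k →
      ∀ q, i ≤ q → q ≤ n → (A p q : ℤ) = (c (p + q - i) : ℤ) := by
    intro k
    induction k with
    | zero =>
      intro p hp1 hpi hik q hq1 hq2
      have hpe : p = i := by omega
      subst hpe
      rw [show p + q - p = q by omega]
      exact h1 q hq1 hq2
    | succ k ih =>
      intro p hp1 hpi hik q hq1 hq2
      by_cases hge : i ≤ p + k
      · exact ih p hp1 hpi hge q hq1 hq2
      have hpi' : p < i := by omega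
      have hrow : ∀ p' q', p < p' → p' ≤ i → i ≤ q' → q' ≤ n →
          (A p' q' : ℤ) = (c (p' + q' - i) : ℤ) := by
        intro p' q' a b d e
        exact ih p' (by omega) b (by omega) q' d e
      have hrowt : ∀ q', i ≤ q' → q' ≤ n → (A (p + 1) q' : ℤ) = (c (p + 1 + q' - i) : ℤ) :=
        fun q' a b => hrow (p + 1) q' (by omega) (by omega) a b
      have hup : ∀ l, i + 1 ≤ l → l ≤ n → (A p l : ℤ) ≤ (c (p + l - i) : ℤ) := by
        intro l hl1 hl2
        have hg := h2 l p (by omega) hl2 hp1 (by omega)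
        rw [hGcast, hGcast, Finset.Icc_self, Finset.sum_singleton] at hg
        have hs1 : ∑ j ∈ Icc 1 i, (A j (l - 1) : ℤ)
            = ∑ j ∈ Icc 1 p, (A j (l - 1) : ℤ) + ∑ j ∈ Icc (p + 1) i, (A j (l - 1) : ℤ) :=
          sum_Icc_split _ 1 p i (by omega) (by omega)
        have hs2 : ∑ j ∈ Icc p i, (A j l : ℤ)
            = (A p l : ℤ) + ∑ j ∈ Icc (p + 1) i, (A j l : ℤ) := by
          rw [sum_Icc_split (fun j => (A j l : ℤ)) p p i (by omega) (by omega),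
            Finset.Icc_self, Finset.sum_singleton]
        have hAil : (A i l : ℤ) = (c l : ℤ) := h1 l (by omega) hl2
        have hk1 : ∑ j ∈ Icc (p + 1) i, (A j (l - 1) : ℤ)
            = ∑ j ∈ Icc (p + 1) i, (c (j + (l - 1) - i) : ℤ) :=
          Finset.sum_congr rfl (fun j hj => by
            simp only [Finset.mem_Icc] at hj
            exact hrow j (l - 1) (by omega) hj.2 (by omega) (by omega))
        have hk2 : ∑ j ∈ Icc (p + 1) i, (A j l : ℤ)
            = ∑ j ∈ Icc (p + 1) i, (c (j + l - i) : ℤ) :=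
          Finset.sum_congr rfl (fun j hj => by
            simp only [Finset.mem_Icc] at hj
            exact hrow j l (by omega) hj.2 (by omega) (by omega))
        have ha : ∑ j ∈ Icc (p + 1) i, (c (j + (l - 1) - i) : ℤ)
            = ∑ j ∈ Icc p (i - 1), (c (j + l - i) : ℤ) := by
          rw [sum_shift' (fun j => (c (j + (l - 1) - i) : ℤ)) (by omega : 1 ≤ i)]
          apply Finset.sum_congr rfl
          intro j hj
          rw [show j + 1 + (l - 1) - i = j + l - i by omega]
        have hb : ∑ j ∈ Icc p i, (c (j + l - i) : ℤ)
            = ∑ j ∈ Icc p (i - 1), (c (j + l - i) : ℤ) + (c l : ℤ) := by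
          rw [sum_Icc_split (fun j => (c (j + l - i) : ℤ)) p (i - 1) i (by omega) (by omega),
            show i - 1 + 1 = i by omega, Finset.Icc_self, Finset.sum_singleton,
            show i + l - i = l by omega]
        have hcx : ∑ j ∈ Icc p i, (c (j + l - i) : ℤ)
            = (c (p + l - i) : ℤ) + ∑ j ∈ Icc (p + 1) i, (c (j + l - i) : ℤ) := by
          rw [sum_Icc_split (fun j => (c (j + l - i) : ℤ)) p p i (by omega) (by omega),
            Finset.Icc_self, Finset.sum_singleton]
        linarith [hg, hs1, hs2, hAil, hk1, hk2, ha, hb, hcx]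
      have hW : ∑ j ∈ Icc i n, (A (p + 1) j : ℤ) = ∑ j ∈ Icc i n, (c (p + 1 + j - i) : ℤ) :=
        Finset.sum_congr rfl (fun j hj => by
          simp only [Finset.mem_Icc] at hj
          exact hrowt j hj.1 hj.2)
      have hti : ∑ j ∈ Icc i n, (A p j : ℤ) = ∑ j ∈ Icc i n, (c (p + j - i) : ℤ) := by
        have h3p := h3 p hp1 hpi'
        have hsi : ∑ j ∈ Icc i n, (c (p + j - i) : ℤ)
            = (c p : ℤ) + (∑ j ∈ Icc i n, (c (p + 1 + j - i) : ℤ)) - (c (p + 1 + n - i) : ℤ) := by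
          have a1 : ∑ j ∈ Icc i n, (c (p + j - i) : ℤ)
              = (c (p + i - i) : ℤ) + ∑ j ∈ Icc (i + 1) n, (c (p + j - i) : ℤ) := by
            rw [sum_Icc_split (fun j => (c (p + j - i) : ℤ)) i i n (by omega) hin,
              Finset.Icc_self, Finset.sum_singleton]
          have a2 : ∑ j ∈ Icc (i + 1) n, (c (p + j - i) : ℤ)
              = ∑ j ∈ Icc i (n - 1), (c (p + 1 + j - i) : ℤ) := by
            rw [sum_shift' (fun j => (c (p + j - i) : ℤ)) (by omega : 1 ≤ n)]
            apply Finset.sum_congr rfl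
            intro j hj
            rw [show p + (j + 1) - i = p + 1 + j - i by omega]
          have a3 : ∑ j ∈ Icc i n, (c (p + 1 + j - i) : ℤ)
              = ∑ j ∈ Icc i (n - 1), (c (p + 1 + j - i) : ℤ) + (c (p + 1 + n - i) : ℤ) := by
            rw [sum_Icc_split (fun j => (c (p + 1 + j - i) : ℤ)) i (n - 1) n (by omega) (by omega),
              show n - 1 + 1 = n by omega, Finset.Icc_self, Finset.sum_singleton]
          have a4 : (c (p + i - i) : ℤ) = (c p : ℤ) := by rw [show p + i - i = p by omega]
          linarith [a1, a2, a3, a4]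
        have hAn : (A (p + 1) n : ℤ) = (c (p + 1 + n - i) : ℤ) := hrowt n hin le_rfl
        linarith [h3p, hW, hsi, hAn]
      have hlowt : ∀ r, i ≤ r → r ≤ n →
          ∑ j ∈ Icc (r + 1) n, (c (p + j - i) : ℤ) ≤ ∑ j ∈ Icc (r + 1) n, (A p j : ℤ) := by
        intro r hr1 hr2
        have hf := h4 p r hp1 hpi' hr1 hr2
        rw [hFcast, hFcast, Finset.Icc_self, Finset.sum_singleton] at hf
        have b1 : ∑ j ∈ Icc i n, (A p j : ℤ)
            = ∑ j ∈ Icc i r, (A p j : ℤ) + ∑ j ∈ Icc (r + 1) n, (A p j : ℤ) :=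
          sum_Icc_split _ i r n (by omega) hr2
        have b2 : ∑ j ∈ Icc r n, (A (p + 1) j : ℤ)
            = ∑ j ∈ Icc r (n - 1), (A (p + 1) j : ℤ) + (A (p + 1) n : ℤ) := by
          rw [sum_Icc_split (fun j => (A (p + 1) j : ℤ)) r (n - 1) n (by omega) (by omega),
            show n - 1 + 1 = n by omega, Finset.Icc_self, Finset.sum_singleton]
        have b3 : ∑ j ∈ Icc r (n - 1), (A (p + 1) j : ℤ)
            = ∑ j ∈ Icc r (n - 1), (c (p + 1 + j - i) : ℤ) :=
          Finset.sum_congr rfl (fun j hj => by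
            simp only [Finset.mem_Icc] at hj
            exact hrowt j (by omega) (by omega))
        have b4 : ∑ j ∈ Icc (r + 1) n, (c (p + j - i) : ℤ)
            = ∑ j ∈ Icc r (n - 1), (c (p + 1 + j - i) : ℤ) := by
          rw [sum_shift' (fun j => (c (p + j - i) : ℤ)) (by omega : 1 ≤ n)]
          apply Finset.sum_congr rfl
          intro j hj
          rw [show p + (j + 1) - i = p + 1 + j - i by omega]
        linarith [hf, b1, b2, b3, b4]
      have hhight : ∀ r, i + 1 ≤ r →
          ∑ j ∈ Icc r n, (A p j : ℤ) ≤ ∑ j ∈ Icc r n, (c (p + j - i) : ℤ) := by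
        intro r hr
        apply Finset.sum_le_sum
        intro j hj
        simp only [Finset.mem_Icc] at hj
        exact hup j (by omega) hj.2
      have hts : ∀ r, i ≤ r → ∑ j ∈ Icc r n, (A p j : ℤ) = ∑ j ∈ Icc r n, (c (p + j - i) : ℤ) := by
        intro r hr
        rcases eq_or_lt_of_le hr with he | hlt'
        · subst he
          exact hti
        · rcases Nat.lt_or_ge n r with hgt | hle
          · rw [Finset.Icc_eq_empty (by omega), Finset.sum_empty, Finset.sum_empty]
          · have hl := hlowt (r - 1) (by omega) (by omega)
            rw [show r - 1 + 1 = r by omega] at hl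
            exact le_antisymm (hhight r (by omega)) hl
      have t1 : ∑ j ∈ Icc q n, (A p j : ℤ)
          = (A p q : ℤ) + ∑ j ∈ Icc (q + 1) n, (A p j : ℤ) := by
        rw [sum_Icc_split (fun j => (A p j : ℤ)) q q n (by omega) hq2,
          Finset.Icc_self, Finset.sum_singleton]
      have t2 : ∑ j ∈ Icc q n, (c (p + j - i) : ℤ)
          = (c (p + q - i) : ℤ) + ∑ j ∈ Icc (q + 1) n, (c (p + j - i) : ℤ) := by
        rw [sum_Icc_split (fun j => (c (p + j - i) : ℤ)) q q n (by omega) hq2,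
          Finset.Icc_self, Finset.sum_singleton]
      have e1 := hts q hq1
      have e2 := hts (q + 1) (by omega)
      linarith [t1, t2, e1, e2]
  intro p q hp1 hpi hq1 hq2
  have := main i p hp1 hpi (by omega) q hq1 hq2
  exact_mod_cast this
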